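/- For any colored cube c and any face i, the colored cube c ∘ (swap of faces i and τ(i)) has the same variety as the mirror cube c*; consequently, two colored cubes c and d have the same set of opposite pairs if and only if d has the same variety as c or the same variety as c*. Moreover c and c* never have the same variety, so a variety v and its mirror variety v* are the only two varieties with a given set of three opposite pairs. -/

import Mathlib

open scoped Classical

/-- A colored cube: a bijection assigning to each face (`Fin 6`) a color (`Fin 6`). -/
abbrev CCube := Equiv.Perm (Fin 6)

/-- The opposite-face involution: face `i` is opposite face `i + 3`. -/
def tau (i : Fin 6) : Fin 6 := i + 3

/-- Quarter-turn rotation about the axis through the face pair `{2, 5}`. -/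
def r1 : Equiv.Perm (Fin 6) := ([0, 1, 3, 4] : List (Fin 6)).formPerm

/-- Quarter-turn rotation about the axis through the face pair `{0, 3}`. -/
def r2 : Equiv.Perm (Fin 6) := ([1, 2, 4, 5] : List (Fin 6)).formPerm

/-- The rotation group of the cube, acting on the set of faces. -/
def G : Subgroup (Equiv.Perm (Fin 6)) := Subgroup.closure {r1, r2}

/-- Two colored cubes have the same variety iff one is obtained from the other by
precomposition with a rotation. -/
def sameVariety (c d : CCube) : Prop := ∃ g ∈ G, d = c * g

def varietySetoid : Setoid CCube where
  r := sameVariety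
  iseqv := by
    refine ⟨fun c => ⟨1, G.one_mem, (mul_one c).symm⟩, ?_, ?_⟩
    · rintro c d ⟨g, hg, rfl⟩
      exact ⟨g⁻¹, G.inv_mem hg, by group⟩
    · rintro a b c ⟨g, hg, rfl⟩ ⟨h, hh, rfl⟩
      exact ⟨g * h, G.mul_mem hg hh, by group⟩

/-- A variety is a `G`-orbit of colored cubes. -/
def Variety := Quotient varietySetoid

/-- The variety of a colored cube. -/
def varietyOf (c : CCube) : Variety := Quotient.mk varietySetoid c

/-- The three opposite pairs of colors of a colored cube. -/
def oppPairs (c : CCube) : Finset (Finset (Fin 6)) :=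
  Finset.image (fun i => ({c i, c (tau i)} : Finset (Fin 6))) Finset.univ

/-- The twelve adjacent pairs of colors of a colored cube. -/
def adjPairs (c : CCube) : Finset (Finset (Fin 6)) :=
  Finset.image (fun p : Fin 6 × Fin 6 => ({c p.1, c p.2} : Finset (Fin 6)))
    (Finset.univ.filter (fun p : Fin 6 × Fin 6 => p.2 ≠ p.1 ∧ p.2 ≠ tau p.1))

/-- The mirror cube of `c`. -/
def mirror (c : CCube) : CCube := c * Equiv.swap 0 3

/-- Cyclic rotation of an ordered triple. -/
def cyc (t : Fin 6 × Fin 6 × Fin 6) : Fin 6 × Fin 6 × Fin 6 := (t.2.1, t.2.2, t.1)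

/-- The cyclic equivalence class of an ordered triple. -/
def cycClass (t : Fin 6 × Fin 6 × Fin 6) : Finset (Fin 6 × Fin 6 × Fin 6) :=
  {t, cyc t, cyc (cyc t)}

/-- The eight corner triples of a colored cube: faces `0, 1, 2` meet at a corner, read
clockwise, and the corners of the cube are the images of this corner under rotations. -/
noncomputable def cornerTriples (c : CCube) : Finset (Finset (Fin 6 × Fin 6 × Fin 6)) :=
  Finset.univ.filter (fun s => ∃ g ∈ G, s = cycClass (c (g 0), c (g 1), c (g 2)))

/-- The opposite pairs of a variety. -/
noncomputable def vOpp (v : Variety) : Finset (Finset (Fin 6)) := oppPairs (Quotient.out v)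

/-- The adjacent pairs of a variety. -/
noncomputable def vAdj (v : Variety) : Finset (Finset (Fin 6)) := adjPairs (Quotient.out v)

/-- The corner triples of a variety. -/
noncomputable def vCorners (v : Variety) : Finset (Finset (Fin 6 × Fin 6 × Fin 6)) :=
  cornerTriples (Quotient.out v)

/-- The mirror variety of a variety. -/
noncomputable def vMirror (v : Variety) : Variety := varietyOf (mirror (Quotient.out v))

/-- A pentad: five varieties which pairwise share no corner triples and whose fifteen
opposite pairs comprise each unordered pair of colors exactly once. -/
def IsPentad (P : Finset Variety) : Prop :=
  P.card = 5 ∧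
  (∀ v ∈ P, ∀ w ∈ P, v ≠ w → vCorners v ∩ vCorners w = ∅) ∧
  (∀ p : Finset (Fin 6), p.card = 2 → ∃! v, v ∈ P ∧ p ∈ vOpp v)

/-- A corner solution from the multiset `S` modeled on the cube `m`: eight distinct cube
instances from `S` in bijection with the eight corner triples of `m`, each chosen cube having
its assigned corner triple among its own corner triples. -/
def CornerSolutionOn (S : Multiset CCube) (m : CCube) : Prop :=
  ∃ ψ : Finset (Fin 6 × Fin 6 × Fin 6) → CCube,
    Multiset.map ψ (cornerTriples m).val ≤ S ∧
    ∀ t ∈ cornerTriples m, t ∈ cornerTriples (ψ t)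

/-- `S` contains a corner solution modeled on some variety. -/
def HasCornerSolution (S : Multiset CCube) : Prop := ∃ m : CCube, CornerSolutionOn S m

/-- An `n`-frame solution from `S` modeled on the cube `m`: a corner solution together with,
for each of the twelve adjacent pairs of `m`, a further `n - 2` cube instances having that
adjacent pair, all `12n - 16` cube instances distinct. -/
def FrameSolutionOn (n : ℕ) (S : Multiset CCube) (m : CCube) : Prop :=
  ∃ (ψ : Finset (Fin 6 × Fin 6 × Fin 6) → CCube) (f : Finset (Fin 6) → Multiset CCube),
    (∀ t ∈ cornerTriples m, t ∈ cornerTriples (ψ t)) ∧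
    (∀ p ∈ adjPairs m, Multiset.card (f p) = n - 2 ∧ ∀ x ∈ f p, p ∈ adjPairs x) ∧
    Multiset.map ψ (cornerTriples m).val + (adjPairs m).sum f ≤ S

/-- `S` contains an `n`-frame solution modeled on some variety. -/
def HasFrameSolution (n : ℕ) (S : Multiset CCube) : Prop := ∃ m : CCube, FrameSolutionOn n S m

set_option maxRecDepth 20000
set_option maxHeartbeats 2000000

lemma hr1G : r1 ∈ G := Subgroup.subset_closure (Set.mem_insert _ _)
lemma hr2G : r2 ∈ G := Subgroup.subset_closure (Set.mem_insert_of_mem _ rfl)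

def pp (v w : Fin 6 → Fin 6) (h1 : ∀ x, w (v x) = x) (h2 : ∀ x, v (w x) = x) :
    Equiv.Perm (Fin 6) := ⟨v, w, h1, h2⟩

def Lmk : List (Equiv.Perm (Fin 6)) := [
  pp ![0,1,2,3,4,5] ![0,1,2,3,4,5] (by decide) (by decide),
  pp ![1,3,2,4,0,5] ![4,0,2,1,3,5] (by decide) (by decide),
  pp ![0,2,4,3,5,1] ![0,5,1,3,2,4] (by decide) (by decide),
  pp ![3,4,2,0,1,5] ![3,4,2,0,1,5] (by decide) (by decide),
  pp ![1,2,0,4,5,3] ![2,0,1,5,3,4] (by decide) (by decide),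
  pp ![2,3,4,5,0,1] ![4,5,0,1,2,3] (by decide) (by decide),
  pp ![0,4,5,3,1,2] ![0,4,5,3,1,2] (by decide) (by decide),
  pp ![4,0,2,1,3,5] ![1,3,2,4,0,5] (by decide) (by decide),
  pp ![3,2,1,0,5,4] ![3,2,1,0,5,4] (by decide) (by decide),
  pp ![2,4,0,5,1,3] ![2,4,0,5,1,3] (by decide) (by decide),
  pp ![1,0,5,4,3,2] ![1,0,5,4,3,2] (by decide) (by decide),
  pp ![3,5,4,0,2,1] ![3,5,4,0,2,1] (by decide) (by decide),
  pp ![4,3,5,1,0,2] ![4,3,5,1,0,2] (by decide) (by decide),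
  pp ![0,5,1,3,2,4] ![0,2,4,3,5,1] (by decide) (by decide),
  pp ![4,2,3,1,5,0] ![5,3,1,2,0,4] (by decide) (by decide),
  pp ![2,0,1,5,3,4] ![1,2,0,4,5,3] (by decide) (by decide),
  pp ![3,1,5,0,4,2] ![3,1,5,0,4,2] (by decide) (by decide),
  pp ![4,5,0,1,2,3] ![2,3,4,5,0,1] (by decide) (by decide),
  pp ![1,5,3,4,2,0] ![5,0,4,2,3,1] (by decide) (by decide),
  pp ![5,0,4,2,3,1] ![1,5,3,4,2,0] (by decide) (by decide),
  pp ![5,3,1,2,0,4] ![4,2,3,1,5,0] (by decide) (by decide),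
  pp ![2,1,3,5,4,0] ![5,1,0,2,4,3] (by decide) (by decide),
  pp ![5,1,0,2,4,3] ![2,1,3,5,4,0] (by decide) (by decide),
  pp ![5,4,3,2,1,0] ![5,4,3,2,1,0] (by decide) (by decide)
]

lemma Lmk_sub : ∀ g ∈ Lmk, g ∈ G := by
  have ww : ∀ w : Equiv.Perm (Fin 6), w ∈ G → ∀ g, w = g → g ∈ G := fun w hw g h => h ▸ hw
  intro g hg
  simp only [Lmk, List.mem_cons, List.not_mem_nil, or_false] at hg
  rcases hg with rfl|rfl|rfl|rfl|rfl|rfl|rfl|rfl|rfl|rfl|rfl|rfl|rfl|rfl|rfl|rfl|rfl|rfl|rfl|rfl|rfl|rfl|rfl|rfl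
  · exact ww (1) (one_mem G) _ (by decide)
  · exact ww (r1) (hr1G) _ (by decide)
  · exact ww (r2) (hr2G) _ (by decide)
  · exact ww (r1*r1) (mul_mem (hr1G) hr1G) _ (by decide)
  · exact ww (r1*r2) (mul_mem (hr1G) hr2G) _ (by decide)
  · exact ww (r2*r1) (mul_mem (hr2G) hr1G) _ (by decide)
  · exact ww (r2*r2) (mul_mem (hr2G) hr2G) _ (by decide)
  · exact ww (r1*r1*r1) (mul_mem (mul_mem (hr1G) hr1G) hr1G) _ (by decide)
  · exact ww (r1*r1*r2) (mul_mem (mul_mem (hr1G) hr1G) hr2G) _ (by decide)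
  · exact ww (r1*r2*r1) (mul_mem (mul_mem (hr1G) hr2G) hr1G) _ (by decide)
  · exact ww (r1*r2*r2) (mul_mem (mul_mem (hr1G) hr2G) hr2G) _ (by decide)
  · exact ww (r2*r1*r1) (mul_mem (mul_mem (hr2G) hr1G) hr1G) _ (by decide)
  · exact ww (r2*r2*r1) (mul_mem (mul_mem (hr2G) hr2G) hr1G) _ (by decide)
  · exact ww (r2*r2*r2) (mul_mem (mul_mem (hr2G) hr2G) hr2G) _ (by decide)
  · exact ww (r1*r1*r1*r2) (mul_mem (mul_mem (mul_mem (hr1G) hr1G) hr1G) hr2G) _ (by decide)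
  · exact ww (r1*r1*r2*r1) (mul_mem (mul_mem (mul_mem (hr1G) hr1G) hr2G) hr1G) _ (by decide)
  · exact ww (r1*r1*r2*r2) (mul_mem (mul_mem (mul_mem (hr1G) hr1G) hr2G) hr2G) _ (by decide)
  · exact ww (r1*r2*r1*r1) (mul_mem (mul_mem (mul_mem (hr1G) hr2G) hr1G) hr1G) _ (by decide)
  · exact ww (r1*r2*r2*r2) (mul_mem (mul_mem (mul_mem (hr1G) hr2G) hr2G) hr2G) _ (by decide)
  · exact ww (r2*r1*r1*r1) (mul_mem (mul_mem (mul_mem (hr2G) hr1G) hr1G) hr1G) _ (by decide)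
  · exact ww (r2*r2*r2*r1) (mul_mem (mul_mem (mul_mem (hr2G) hr2G) hr2G) hr1G) _ (by decide)
  · exact ww (r1*r1*r1*r2*r1) (mul_mem (mul_mem (mul_mem (mul_mem (hr1G) hr1G) hr1G) hr2G) hr1G) _ (by decide)
  · exact ww (r1*r2*r1*r1*r1) (mul_mem (mul_mem (mul_mem (mul_mem (hr1G) hr2G) hr1G) hr1G) hr1G) _ (by decide)
  · exact ww (r1*r2*r2*r2*r1) (mul_mem (mul_mem (mul_mem (mul_mem (hr1G) hr2G) hr2G) hr2G) hr1G) _ (by decide)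

lemma tau_ne : ∀ i : Fin 6, tau i ≠ i := by decide
lemma tautau : ∀ i : Fin 6, tau (tau i) = i := by decide

lemma LmkP : ∀ g ∈ Lmk, ∀ i, g (tau i) = tau (g i) := by decide
lemma swapP : ∀ i, Equiv.swap (0 : Fin 6) 3 (tau i) = tau (Equiv.swap 0 3 i) := by decide

lemma exists48_bool : ∀ x y z : Fin 6,
    ((y == x) || (y == tau x) || (z == x) || (z == tau x) || (z == y) || (z == tau y) ||
    (Lmk.any fun g =>
      (decide (g 0 = x) && decide (g 1 = y) && decide (g 2 = z)) ||
      (decide ((Equiv.swap 0 3 * g : Equiv.Perm (Fin 6)) 0 = x) &&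
        decide ((Equiv.swap 0 3 * g : Equiv.Perm (Fin 6)) 1 = y) &&
        decide ((Equiv.swap 0 3 * g : Equiv.Perm (Fin 6)) 2 = z)))) = true := by
  decide

lemma exists48 : ∀ x y z : Fin 6, y ≠ x → y ≠ tau x → z ≠ x → z ≠ tau x → z ≠ y → z ≠ tau y →
    ∃ g ∈ Lmk, (g 0 = x ∧ g 1 = y ∧ g 2 = z) ∨
      ((Equiv.swap 0 3 * g : Equiv.Perm (Fin 6)) 0 = x ∧ (Equiv.swap 0 3 * g : Equiv.Perm (Fin 6)) 1 = y ∧ (Equiv.swap 0 3 * g : Equiv.Perm (Fin 6)) 2 = z) := by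
  intro x y z h1 h2 h3 h4 h5 h6
  have hb := exists48_bool x y z
  simp only [Bool.or_eq_true, beq_iff_eq] at hb
  rcases hb with ((((((hb | hb) | hb) | hb) | hb) | hb) | hb)
  · exact absurd hb h1
  · exact absurd hb h2
  · exact absurd hb h3
  · exact absurd hb h4
  · exact absurd hb h5
  · exact absurd hb h6
  rw [List.any_eq_true] at hb
  obtain ⟨g, hg, hgb⟩ := hb
  refine ⟨g, hg, ?_⟩
  simp only [Bool.or_eq_true, Bool.and_eq_true, decide_eq_true_eq] at hgb
  tauto

lemma ext3 (a b : Equiv.Perm (Fin 6)) (ha : ∀ i, a (tau i) = tau (a i))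
    (hb : ∀ i, b (tau i) = tau (b i)) (h0 : a 0 = b 0) (h1 : a 1 = b 1) (h2 : a 2 = b 2) :
    a = b := by
  apply Equiv.ext
  intro i
  fin_cases i
  · exact h0
  · exact h1
  · exact h2
  · show a (tau 0) = b (tau 0)
    rw [ha 0, hb 0, h0]
  · show a (tau 1) = b (tau 1)
    rw [ha 1, hb 1, h1]
  · show a (tau 2) = b (tau 2)
    rw [ha 2, hb 2, h2]

/-- The subgroup of permutations commuting with `tau`. -/
def K : Subgroup (Equiv.Perm (Fin 6)) where
  carrier := {g | ∀ i, g (tau i) = tau (g i)}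
  one_mem' := fun _ => rfl
  mul_mem' := by
    intro a b ha hb i
    show a (b (tau i)) = tau (a (b i))
    rw [hb i, ha (b i)]
  inv_mem' := by
    intro a ha i
    apply a.injective
    rw [Equiv.Perm.coe_inv, Equiv.apply_symm_apply, ha, Equiv.apply_symm_apply]

lemma hGK : G ≤ K := by
  rw [G]
  apply (Subgroup.closure_le K).mpr
  intro g hg
  simp only [Set.mem_insert_iff, Set.mem_singleton_iff] at hg
  rcases hg with rfl | rfl
  · exact (by decide : ∀ i, r1 (tau i) = tau (r1 i))
  · exact (by decide : ∀ i, r2 (tau i) = tau (r2 i))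

lemma oppPairs_mul_P (c g : CCube) (hg : ∀ i, g (tau i) = tau (g i)) :
    oppPairs (c * g) = oppPairs c := by
  have hfun : (fun i => ({(c * g) i, (c * g) (tau i)} : Finset (Fin 6)))
      = (fun j => ({c j, c (tau j)} : Finset (Fin 6))) ∘ g := by
    funext i
    show ({c (g i), c (g (tau i))} : Finset (Fin 6)) = {c (g i), c (tau (g i))}
    rw [hg i]
  rw [oppPairs, oppPairs, hfun, ← Finset.image_image]
  congr 1
  exact Finset.image_univ_equiv g

lemma pair_analysis (c d : CCube) (hopp : oppPairs c = oppPairs d) (i : Fin 6) :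
    (c⁻¹ * d) (tau i) = tau ((c⁻¹ * d) i) := by
  have hmem : ({d i, d (tau i)} : Finset (Fin 6)) ∈ oppPairs c := by
    rw [hopp]
    exact Finset.mem_image_of_mem _ (Finset.mem_univ i)
  rw [oppPairs, Finset.mem_image] at hmem
  obtain ⟨j, -, hj⟩ := hmem
  have h1 : d i = c j ∨ d i = c (tau j) := by
    have : d i ∈ ({c j, c (tau j)} : Finset (Fin 6)) := by rw [hj]; simp
    simpa using this
  have h2 : d (tau i) = c j ∨ d (tau i) = c (tau j) := by
    have : d (tau i) ∈ ({c j, c (tau j)} : Finset (Fin 6)) := by rw [hj]; simp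
    simpa using this
  have hne : d (tau i) ≠ d i := d.injective.ne (tau_ne i)
  show c⁻¹ (d (tau i)) = tau (c⁻¹ (d i))
  rcases h1 with h1 | h1 <;> rcases h2 with h2 | h2
  · exact absurd (h2.trans h1.symm) hne
  · rw [h1, h2, Equiv.Perm.coe_inv, Equiv.symm_apply_apply, Equiv.symm_apply_apply]
  · rw [h1, h2, Equiv.Perm.coe_inv, Equiv.symm_apply_apply, Equiv.symm_apply_apply, tautau]
  · exact absurd (h2.trans h1.symm) hne

def q3 (i : Fin 6) : Fin 3 := ⟨i % 3, Nat.mod_lt _ (by norm_num)⟩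
def s3 (j : Fin 3) : Fin 6 := ⟨j, by omega⟩

lemma q3s3 : ∀ j, q3 (s3 j) = j := by decide
lemma s3q3 : ∀ i : Fin 6, i = s3 (q3 i) ∨ i = tau (s3 (q3 i)) := by decide
lemma q3tau : ∀ i, q3 (tau i) = q3 i := by decide

lemma q3g (g : Equiv.Perm (Fin 6)) (hg : g ∈ K) (i : Fin 6) :
    q3 (g i) = q3 (g (s3 (q3 i))) := by
  rcases s3q3 i with h | h
  · rw [← h]
  · calc q3 (g i) = q3 (g (tau (s3 (q3 i)))) := by rw [← h]
    _ = q3 (tau (g (s3 (q3 i)))) := by rw [hg (s3 (q3 i))]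
    _ = q3 (g (s3 (q3 i))) := q3tau _

def pi0 (g : Equiv.Perm (Fin 6)) : Fin 3 → Fin 3 := fun j => q3 (g (s3 j))

lemma pi0_mul (g h : Equiv.Perm (Fin 6)) (hg : g ∈ K) : pi0 (g * h) = pi0 g ∘ pi0 h :=
  funext fun j => q3g g hg (h (s3 j))

def piK (g : K) : Equiv.Perm (Fin 3) where
  toFun := pi0 (g : Equiv.Perm (Fin 6))
  invFun := pi0 ((g : Equiv.Perm (Fin 6))⁻¹)
  left_inv := by
    intro x
    show (pi0 (g : Equiv.Perm (Fin 6))⁻¹ ∘ pi0 (g : Equiv.Perm (Fin 6))) x = x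
    rw [← pi0_mul _ _ (K.inv_mem g.2), inv_mul_cancel]
    exact q3s3 x
  right_inv := by
    intro x
    show (pi0 (g : Equiv.Perm (Fin 6)) ∘ pi0 (g : Equiv.Perm (Fin 6))⁻¹) x = x
    rw [← pi0_mul _ _ g.2, mul_inv_cancel]
    exact q3s3 x

def piHom : K →* Equiv.Perm (Fin 3) where
  toFun := piK
  map_one' := Equiv.ext fun j => q3s3 j
  map_mul' := fun a b => Equiv.ext fun j => congrFun (pi0_mul (a : Equiv.Perm (Fin 6)) b a.2) j

noncomputable def phi : K →* ℤˣ :=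
  (Equiv.Perm.sign.comp K.subtype) * (Equiv.Perm.sign.comp piHom)

lemma hr1K : r1 ∈ K := by exact (by decide : ∀ i, r1 (tau i) = tau (r1 i))
lemma hr2K : r2 ∈ K := by exact (by decide : ∀ i, r2 (tau i) = tau (r2 i))

lemma sign_r1 : Equiv.Perm.sign r1 = -1 := by
  rw [show r1 = Equiv.swap 0 1 * Equiv.swap 1 3 * Equiv.swap 3 4 from by decide,
    map_mul, map_mul, Equiv.Perm.sign_swap (by decide), Equiv.Perm.sign_swap (by decide),
    Equiv.Perm.sign_swap (by decide)]
  decide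

lemma sign_r2 : Equiv.Perm.sign r2 = -1 := by
  rw [show r2 = Equiv.swap 1 2 * Equiv.swap 2 4 * Equiv.swap 4 5 from by decide,
    map_mul, map_mul, Equiv.Perm.sign_swap (by decide), Equiv.Perm.sign_swap (by decide),
    Equiv.Perm.sign_swap (by decide)]
  decide

lemma pi_r1 : piHom ⟨r1, hr1K⟩ = Equiv.swap 0 1 :=
  Equiv.ext (by decide : ∀ j, pi0 r1 j = Equiv.swap 0 1 j)

lemma pi_r2 : piHom ⟨r2, hr2K⟩ = Equiv.swap 1 2 :=
  Equiv.ext (by decide : ∀ j, pi0 r2 j = Equiv.swap 1 2 j)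

lemma hGH : G ≤ Subgroup.map K.subtype phi.ker := by
  rw [G]
  apply (Subgroup.closure_le _).mpr
  intro g hg
  simp only [Set.mem_insert_iff, Set.mem_singleton_iff] at hg
  rcases hg with rfl | rfl
  · refine ⟨⟨r1, hr1K⟩, ?_, rfl⟩
    show phi _ = 1
    rw [phi, MonoidHom.mul_apply, MonoidHom.comp_apply, MonoidHom.comp_apply]
    rw [show K.subtype ⟨r1, hr1K⟩ = r1 from rfl, sign_r1, pi_r1,
      Equiv.Perm.sign_swap (by decide)]
    decide
  · refine ⟨⟨r2, hr2K⟩, ?_, rfl⟩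
    show phi _ = 1
    rw [phi, MonoidHom.mul_apply, MonoidHom.comp_apply, MonoidHom.comp_apply]
    rw [show K.subtype ⟨r2, hr2K⟩ = r2 from rfl, sign_r2, pi_r2,
      Equiv.Perm.sign_swap (by decide)]
    decide

lemma swap03_not_mem_G : Equiv.swap (0 : Fin 6) 3 ∉ G := by
  intro hmem
  obtain ⟨x, hker, hx⟩ := hGH hmem
  have hx' : (x : Equiv.Perm (Fin 6)) = Equiv.swap 0 3 := hx
  have hpix : piHom x = 1 := by
    apply Equiv.ext
    intro j
    show pi0 (x : Equiv.Perm (Fin 6)) j = j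
    rw [hx']
    revert j
    decide
  have : phi x = -1 := by
    rw [phi, MonoidHom.mul_apply, MonoidHom.comp_apply, MonoidHom.comp_apply,
      Subgroup.coe_subtype, hx', hpix, Equiv.Perm.sign_swap (by decide)]
    decide
  have hker' : phi x = 1 := hker
  rw [hker'] at this
  exact absurd this (by decide)

lemma swap_tau_key : ∀ i : Fin 6,
    Equiv.swap i (tau i) * Equiv.swap 0 3 = 1 ∨
    Equiv.swap i (tau i) * Equiv.swap 0 3 = r1 * r1 ∨
    Equiv.swap i (tau i) * Equiv.swap 0 3 = r1 * r1 * r2 * r2 := by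
  decide

lemma swap_tau_mem (i : Fin 6) : Equiv.swap i (tau i) * Equiv.swap 0 3 ∈ G := by
  rcases swap_tau_key i with h | h | h <;> rw [h]
  · exact one_mem G
  · exact mul_mem hr1G hr1G
  · exact mul_mem (mul_mem (mul_mem hr1G hr1G) hr2G) hr2G

/-- For any colored cube `c` and any face `i`, the cube `c ∘ swap i (tau i)` has the same
variety as the mirror cube of `c`; two colored cubes have the same set of opposite pairs iff
one has the same variety as the other or as its mirror; and a cube never has the same variety
as its mirror cube. -/
theorem mirror_characterization :
    (∀ (c : CCube) (i : Fin 6), sameVariety (c * Equiv.swap i (tau i)) (mirror c)) ∧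
    (∀ c d : CCube, oppPairs c = oppPairs d ↔ (sameVariety d c ∨ sameVariety d (mirror c))) ∧
    (∀ c : CCube, ¬ sameVariety c (mirror c)) := by
  refine ⟨?_, ?_, ?_⟩
  · -- part 1
    intro c i
    refine ⟨Equiv.swap i (tau i) * Equiv.swap 0 3, swap_tau_mem i, ?_⟩
    show c * Equiv.swap 0 3 = c * Equiv.swap i (tau i) * (Equiv.swap i (tau i) * Equiv.swap 0 3)
    rw [mul_assoc, ← mul_assoc (Equiv.swap i (tau i)), Equiv.swap_mul_self, one_mul]
  · -- part 2
    intro c d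
    constructor
    · intro hopp
      set h : CCube := c⁻¹ * d with hh
      have hd : d = c * h := (mul_inv_cancel_left c d).symm
      have hP : ∀ i, h (tau i) = tau (h i) := pair_analysis c d hopp
      have e30 : h 3 = tau (h 0) := by
        rw [show (3 : Fin 6) = tau 0 from by decide, hP 0]
      have e41 : h 4 = tau (h 1) := by
        rw [show (4 : Fin 6) = tau 1 from by decide, hP 1]
      obtain ⟨g, hgL, hcase⟩ := exists48 (h 0) (h 1) (h 2)
        (h.injective.ne (by decide))
        (by rw [← e30]; exact h.injective.ne (by decide))
        (h.injective.ne (by decide))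
        (by rw [← e30]; exact h.injective.ne (by decide))
        (h.injective.ne (by decide))
        (by rw [← e41]; exact h.injective.ne (by decide))
      rcases hcase with ⟨e0, e1, e2⟩ | ⟨e0, e1, e2⟩
      · left
        have heq : h = g := ext3 h g hP (LmkP g hgL) e0.symm e1.symm e2.symm
        have hhG : h ∈ G := by rw [heq]; exact Lmk_sub g hgL
        exact ⟨h⁻¹, G.inv_mem hhG, by rw [hd, mul_inv_cancel_right]⟩
      · right
        have hP2 : ∀ i, (Equiv.swap 0 3 * g : Equiv.Perm (Fin 6)) (tau i) = tau ((Equiv.swap 0 3 * g : Equiv.Perm (Fin 6)) i) := by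
          intro i
          show Equiv.swap 0 3 (g (tau i)) = tau (Equiv.swap 0 3 (g i))
          rw [LmkP g hgL i, swapP (g i)]
        have heq : h = Equiv.swap 0 3 * g := ext3 h _ hP hP2 e0.symm e1.symm e2.symm
        have hswapH : Equiv.swap 0 3 * h ∈ G := by
          rw [heq, ← mul_assoc, Equiv.swap_mul_self, one_mul]
          exact Lmk_sub g hgL
        have hmemG : h⁻¹ * Equiv.swap 0 3 ∈ G := by
          have := G.inv_mem hswapH
          rwa [mul_inv_rev, Equiv.swap_inv] at this
        refine ⟨h⁻¹ * Equiv.swap 0 3, hmemG, ?_⟩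
        show c * Equiv.swap 0 3 = d * (h⁻¹ * Equiv.swap 0 3)
        rw [hd, mul_assoc, mul_inv_cancel_left]
    · intro hsv
      rcases hsv with ⟨g, hg, hc⟩ | ⟨g, hg, hm⟩
      · rw [hc]
        exact oppPairs_mul_P d g (hGK hg)
      · have hd : d = c * (Equiv.swap 0 3 * g⁻¹) := by
          have : d = mirror c * g⁻¹ := by rw [hm, mul_inv_cancel_right]
          rw [this]
          show c * Equiv.swap 0 3 * g⁻¹ = _
          rw [mul_assoc]
        rw [hd, oppPairs_mul_P c _ (K.mul_mem swapP (K.inv_mem (hGK hg)))]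
  · -- part 3
    intro c hsv
    obtain ⟨g, hg, he⟩ := hsv
    have : Equiv.swap (0 : Fin 6) 3 = g := mul_left_cancel (a := c) he
    rw [← this] at hg
    exact swap03_not_mem_G hg
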